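/- arXiv:0911.3253 — 2 statements merged into one kernel-verified Lean document; each statement's English description precedes it below -/
import Mathlib

section
/- With notation as in the previous statement, the map Ψ(R(U)) = SF(R(U)·(y_1+...+y_{|λ|} − d·y_{|λ|+1})) equals ∑_{U'} R(U'), where U' runs over partitionings obtained from U by adding the new element |λ|+1 to one of the odd-cardinality blocks of U. -/
open MvPolynomial Finset

noncomputable section

/-- The "square-free map" dropping all non-square-free monomials of a polynomial. -/
def SF (p : MvPolynomial ℕ ℂ) : MvPolynomial ℕ ℂ :=
  ∑ d ∈ p.support.filter (fun d => ∀ i ∈ d.support, d i ≤ 1),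
    monomial d (coeff d p)

lemma coeff_SF_of {p : MvPolynomial ℕ ℂ} {e : ℕ →₀ ℕ} (he : ∀ i ∈ e.support, e i ≤ 1) :
    coeff e (SF p) = coeff e p := by
  classical
  unfold SF
  rw [coeff_sum]
  simp only [coeff_monomial]
  rw [Finset.sum_ite_eq' ]
  by_cases hm : e ∈ p.support.filter (fun d => ∀ i ∈ d.support, d i ≤ 1)
  · rw [if_pos hm]
  · rw [if_neg hm]
    rw [Finset.mem_filter] at hm
    push_neg at hm
    by_cases hs : e ∈ p.support
    · exact absurd (hm hs) (by push_neg; exact fun i hi => he i hi)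
    · simp only [mem_support_iff, not_not] at hs
      exact hs.symm

lemma coeff_SF_not {p : MvPolynomial ℕ ℂ} {e : ℕ →₀ ℕ} (he : ¬ ∀ i ∈ e.support, e i ≤ 1) :
    coeff e (SF p) = 0 := by
  classical
  unfold SF
  rw [coeff_sum]
  simp only [coeff_monomial]
  rw [Finset.sum_ite_eq']
  rw [if_neg]
  intro hm
  exact he (Finset.mem_filter.1 hm).2

lemma SF_add (p q : MvPolynomial ℕ ℂ) : SF (p + q) = SF p + SF q := by
  ext e
  by_cases he : ∀ i ∈ e.support, e i ≤ 1
  · simp [coeff_SF_of he, coeff_add]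
  · simp [coeff_SF_not he, coeff_add]

lemma SF_sub (p q : MvPolynomial ℕ ℂ) : SF (p - q) = SF p - SF q := by
  ext e
  by_cases he : ∀ i ∈ e.support, e i ≤ 1
  · simp [coeff_SF_of he, coeff_sub]
  · simp [coeff_SF_not he, coeff_sub]

lemma SF_sum {α : Type*} (s : Finset α) (f : α → MvPolynomial ℕ ℂ) :
    SF (∑ x ∈ s, f x) = ∑ x ∈ s, SF (f x) := by
  ext e
  by_cases he : ∀ i ∈ e.support, e i ≤ 1
  · simp [coeff_SF_of he, coeff_sum]
  · simp [coeff_SF_not he, coeff_sum, coeff_SF_not]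

lemma SF_C_mul (c : ℂ) (p : MvPolynomial ℕ ℂ) : SF (C c * p) = C c * SF p := by
  ext e
  by_cases he : ∀ i ∈ e.support, e i ≤ 1
  · simp [coeff_SF_of he, coeff_C_mul]
  · simp [coeff_SF_not he, coeff_C_mul]

lemma SF_eq_self {p : MvPolynomial ℕ ℂ} (h : ∀ d ∈ p.support, ∀ i, d i ≤ 1) : SF p = p := by
  unfold SF
  rw [Finset.filter_true_of_mem, support_sum_monomial_coeff]
  exact fun d hd => fun i _ => h d hd i

lemma SF_sq_mul (a : ℕ) (q : MvPolynomial ℕ ℂ) : SF (X a ^ 2 * q) = 0 := by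
  ext e
  rw [coeff_zero]
  by_cases he : ∀ i ∈ e.support, e i ≤ 1
  · rw [coeff_SF_of he]
    by_contra h
    have hmem : e ∈ (X a ^ 2 * (q : MvPolynomial ℕ ℂ)).support := mem_support_iff.2 h
    have := support_mul _ _ hmem
    rw [support_X_pow] at this
    obtain ⟨d1, hd1, d2, hd2, rfl⟩ := Finset.mem_add.1 this
    rw [Finset.mem_singleton] at hd1
    subst hd1
    have h2 : 2 ≤ (Finsupp.single a 2 + d2 : ℕ →₀ ℕ) a := by
      rw [Finsupp.add_apply]; simp
    have h3 : a ∈ (Finsupp.single a 2 + d2 : ℕ →₀ ℕ).support := by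
      rw [Finsupp.mem_support_iff]; omega
    have := he a h3
    omega
  · exact coeff_SF_not he

/-- multilinear with variables in `T` -/
def ML (p : MvPolynomial ℕ ℂ) (T : Finset ℕ) : Prop :=
  ∀ d ∈ p.support, (∀ i, d i ≤ 1) ∧ d.support ⊆ T

lemma ML.mono {p : MvPolynomial ℕ ℂ} {T T' : Finset ℕ} (h : ML p T) (hTT' : T ⊆ T') :
    ML p T' :=
  fun d hd => ⟨(h d hd).1, (h d hd).2.trans hTT'⟩

lemma ML_sub_X (a b : ℕ) : ML (X a - X b) {a, b} := by
  intro d hd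
  have := support_sub ℕ (X a : MvPolynomial ℕ ℂ) (X b) hd
  rw [support_X, support_X] at this
  simp only [Finset.mem_union, Finset.mem_singleton] at this
  rcases this with rfl | rfl
  · refine ⟨fun i => ?_, ?_⟩
    · rw [Finsupp.single_apply]; split <;> omega
    · exact (Finsupp.support_single_subset).trans (by simp)
  · refine ⟨fun i => ?_, ?_⟩
    · rw [Finsupp.single_apply]; split <;> omega
    · exact (Finsupp.support_single_subset).trans (by simp)

lemma ML.mul {p q : MvPolynomial ℕ ℂ} {T T' : Finset ℕ} (hp : ML p T) (hq : ML q T')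
    (hTT' : Disjoint T T') : ML (p * q) (T ∪ T') := by
  intro d hd
  obtain ⟨d1, hd1, d2, hd2, rfl⟩ := Finset.mem_add.1 (support_mul p q hd)
  obtain ⟨h11, h12⟩ := hp d1 hd1
  obtain ⟨h21, h22⟩ := hq d2 hd2
  constructor
  · intro i
    rw [Finsupp.add_apply]
    by_cases h : i ∈ T
    · have h2 : d2 i = 0 := by
        by_contra hne
        exact (Finset.disjoint_left.1 hTT' h) (h22 (Finsupp.mem_support_iff.2 hne))
      have := h11 i; omega
    · have h1 : d1 i = 0 := by
        by_contra hne
        exact h (h12 (Finsupp.mem_support_iff.2 hne))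
      have := h21 i; omega
  · intro i hi
    rcases Finset.mem_union.1 (Finsupp.support_add hi) with h | h
    · exact Finset.mem_union_left _ (h12 h)
    · exact Finset.mem_union_right _ (h22 h)

lemma ML_one : ML 1 ∅ := by
  intro d hd
  have h1 : (1 : MvPolynomial ℕ ℂ) = monomial 0 1 := by rw [← C_1, C_apply]
  rw [h1] at hd
  have hd' := support_monomial_subset hd
  rw [Finset.mem_singleton] at hd'
  subst hd'
  exact ⟨fun i => by simp, by simp⟩

lemma ML.prod {α : Type*} [DecidableEq α] (s : Finset α) (f : α → MvPolynomial ℕ ℂ)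
    (T : α → Finset ℕ) (hf : ∀ k ∈ s, ML (f k) (T k))
    (hdisj : ∀ i ∈ s, ∀ j ∈ s, i ≠ j → Disjoint (T i) (T j)) :
    ML (∏ k ∈ s, f k) (s.biUnion T) := by
  induction s using Finset.induction_on with
  | empty => simpa using ML_one
  | insert a s ha ih =>
    rw [Finset.prod_insert ha, Finset.biUnion_insert]
    have hd : Disjoint (T a) (s.biUnion T) := by
      rw [Finset.disjoint_biUnion_right]
      intro j hj
      exact hdisj a (Finset.mem_insert_self a s) j (Finset.mem_insert_of_mem hj)
        (fun h => ha (h ▸ hj))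
    exact (hf a (Finset.mem_insert_self a s)).mul
      (ih (fun k hk => hf k (Finset.mem_insert_of_mem hk))
        (fun i hi j hj hij => hdisj i (Finset.mem_insert_of_mem hi) j
          (Finset.mem_insert_of_mem hj) hij)) hd

/-- `R` of a block `{u_1 < u_2 < … < u_r}`:
`(y_{u_1} - y_{u_2})(y_{u_3} - y_{u_4}) ⋯ (y_{u_{2⌊r/2⌋-1}} - y_{u_{2⌊r/2⌋}})`. -/
def Rblock (B : Finset ℕ) : MvPolynomial ℕ ℂ :=
  ∏ i ∈ Finset.range (B.card / 2),
    (X ((B.sort (· ≤ ·)).getD (2 * i) 0) - X ((B.sort (· ≤ ·)).getD (2 * i + 1) 0))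

/-- `R(U)`: the product of the `R`-polynomials of the blocks of `U`. -/
def RU {l : ℕ} (U : Fin l → Finset ℕ) : MvPolynomial ℕ ℂ :=
  ∏ j, Rblock (U j)

lemma getD_mem {B : Finset ℕ} {k : ℕ} (hk : k < B.card) :
    (B.sort (· ≤ ·)).getD k 0 ∈ B := by
  have hl : k < (B.sort (· ≤ ·)).length := by rw [Finset.length_sort]; exact hk
  rw [List.getD_eq_getElem _ _ hl]
  exact (Finset.mem_sort _).1 (List.getElem_mem hl)

lemma getD_inj {B : Finset ℕ} {k k' : ℕ} (hk : k < B.card) (hk' : k' < B.card)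
    (h : (B.sort (· ≤ ·)).getD k 0 = (B.sort (· ≤ ·)).getD k' 0) : k = k' := by
  have hl : k < (B.sort (· ≤ ·)).length := by rw [Finset.length_sort]; exact hk
  have hl' : k' < (B.sort (· ≤ ·)).length := by rw [Finset.length_sort]; exact hk'
  rw [List.getD_eq_getElem _ _ hl, List.getD_eq_getElem _ _ hl'] at h
  exact (List.Nodup.getElem_inj_iff (Finset.sort_nodup _ _)).1 h

lemma ML_Rblock (B : Finset ℕ) : ML (Rblock B) B := by
  have h2 : ∀ i : ℕ, i < B.card / 2 → 2 * i + 1 < B.card := fun i hi => by omega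
  have := ML.prod (Finset.range (B.card / 2))
    (fun i => X ((B.sort (· ≤ ·)).getD (2 * i) 0) - X ((B.sort (· ≤ ·)).getD (2 * i + 1) 0))
    (fun i => {(B.sort (· ≤ ·)).getD (2 * i) 0, (B.sort (· ≤ ·)).getD (2 * i + 1) 0})
    (fun k _ => ML_sub_X _ _)
    (by
      intro i hi j hj hij
      rw [Finset.mem_range] at hi hj
      rw [Finset.disjoint_left]
      intro x hx hx'
      simp only [Finset.mem_insert, Finset.mem_singleton] at hx hx'
      rcases hx with rfl | rfl <;> rcases hx' with h | h <;>
        [skip; skip; skip; skip] <;>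
        · have := getD_inj (by omega : _ < B.card) (by omega : _ < B.card) h
          omega)
  refine this.mono ?_
  intro x hx
  rw [Finset.mem_biUnion] at hx
  obtain ⟨i, hi, hx⟩ := hx
  rw [Finset.mem_range] at hi
  simp only [Finset.mem_insert, Finset.mem_singleton] at hx
  rcases hx with rfl | rfl
  · exact getD_mem (by omega)
  · exact getD_mem (by omega)

lemma ML_RU {l : ℕ} (U : Fin l → Finset ℕ) (hdisj : ∀ i j, i ≠ j → Disjoint (U i) (U j)) :
    ML (RU U) (Finset.univ.biUnion U) :=
  ML.prod Finset.univ (fun j => Rblock (U j)) U (fun k _ => ML_Rblock (U k))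
    (fun i _ j _ hij => hdisj i j hij)

lemma RU_squarefree {l : ℕ} (U : Fin l → Finset ℕ)
    (hdisj : ∀ i j, i ≠ j → Disjoint (U i) (U j)) :
    ∀ d ∈ (RU U).support, ∀ i, d i ≤ 1 :=
  fun d hd => (ML_RU U hdisj d hd).1

lemma sort_insert_max {B : Finset ℕ} {n : ℕ} (hn : ∀ b ∈ B, b < n) :
    (insert n B).sort (· ≤ ·) = B.sort (· ≤ ·) ++ [n] := by
  have hnB : n ∉ B := fun h => lt_irrefl n (hn n h)
  apply fun h1 h2 h3 => List.Perm.eq_of_pairwise' (r := fun x1 x2 : ℕ => x1 ≤ x2) h2 h3 h1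
  · refine (Finset.sort_perm_toList _ _).trans ?_
    refine (Finset.toList_insert hnB).trans ?_
    refine List.Perm.trans ?_ List.perm_append_comm
    exact List.Perm.cons n ((Finset.sort_perm_toList _ _).symm)
  · exact Finset.pairwise_sort _ _
  · rw [List.pairwise_append]
    refine ⟨Finset.pairwise_sort _ _, List.pairwise_singleton _ _, ?_⟩
    intro a ha b hb
    rw [List.mem_singleton] at hb
    subst hb
    exact le_of_lt (hn a ((Finset.mem_sort _).1 ha))

lemma Rblock_insert {B : Finset ℕ} {n : ℕ} (hn : ∀ b ∈ B, b < n) (hodd : Odd B.card) :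
    Rblock (insert n B) =
      Rblock B * (X ((B.sort (· ≤ ·)).getD (B.card - 1) 0) - X n) := by
  have hnB : n ∉ B := fun h => lt_irrefl n (hn n h)
  obtain ⟨m, hm⟩ := hodd
  have hlen : (B.sort (· ≤ ·)).length = B.card := Finset.length_sort _
  unfold Rblock
  rw [Finset.card_insert_of_notMem hnB, sort_insert_max hn]
  have h2 : (B.card + 1) / 2 = m + 1 := by omega
  have h3 : B.card / 2 = m := by omega
  rw [h2, h3, Finset.prod_range_succ]
  congr 1
  · apply Finset.prod_congr rfl
    intro i hi
    rw [Finset.mem_range] at hi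
    rw [List.getD_append _ _ _ _ (by omega), List.getD_append _ _ _ _ (by omega)]
  · have hc : B.card - 1 = 2 * m := by omega
    rw [hc, List.getD_append _ _ _ _ (by omega), List.getD_append_right _ _ _ _ (by omega)]
    have h4 : 2 * m + 1 - (B.sort (· ≤ ·)).length = 0 := by omega
    rw [h4]
    rfl

lemma RU_eq_block_mul {l : ℕ} (U : Fin l → Finset ℕ) (j : Fin l) :
    RU U = Rblock (U j) * ∏ k ∈ Finset.univ.erase j, Rblock (U k) :=
  (Finset.mul_prod_erase _ _ (Finset.mem_univ j)).symm

lemma RU_update {l : ℕ} (U : Fin l → Finset ℕ) (j : Fin l) (B' : Finset ℕ) :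
    RU (Function.update U j B') = Rblock B' * ∏ k ∈ Finset.univ.erase j, Rblock (U k) := by
  unfold RU
  rw [← Finset.mul_prod_erase _ (fun k => Rblock (Function.update U j B' k)) (Finset.mem_univ j)]
  congr 1
  · rw [Function.update_self]
  · apply Finset.prod_congr rfl
    intro k hk
    rw [Function.update_of_ne (Finset.ne_of_mem_erase hk)]

lemma SF_pair (a b : ℕ) (Q : MvPolynomial ℕ ℂ) :
    SF (((X a - X b) * Q) * (X a + X b)) = 0 := by
  have h : ((X a - X b) * Q) * (X a + X b) = X a ^ 2 * Q - X b ^ 2 * Q := by ring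
  rw [h, SF_sub, SF_sq_mul, SF_sq_mul, sub_zero]

lemma list_sum_eq_range {M : Type*} [AddCommMonoid M] (L : List ℕ) (f : ℕ → M) :
    (L.map f).sum = ∑ k ∈ Finset.range L.length, f (L.getD k 0) := by
  induction L with
  | nil => simp
  | cons a t ih =>
    rw [List.map_cons, List.sum_cons, List.length_cons,
      Finset.sum_range_succ' (fun k => f ((a :: t).getD k 0)) t.length]
    simp only [List.getD_cons_succ, List.getD_cons_zero]
    rw [ih, add_comm]

lemma sum_finset_eq_range {M : Type*} [AddCommMonoid M] (B : Finset ℕ) (f : ℕ → M) :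
    ∑ i ∈ B, f i = ∑ k ∈ Finset.range B.card, f ((B.sort (· ≤ ·)).getD k 0) := by
  rw [← Finset.sum_map_toList B f, ← (Finset.sort_perm_toList B (· ≤ ·)).map f |>.sum_eq,
    list_sum_eq_range, Finset.length_sort]

lemma sum_range_two_mul {M : Type*} [AddCommMonoid M] (m : ℕ) (g : ℕ → M) :
    ∑ k ∈ Finset.range (2 * m), g k = ∑ i ∈ Finset.range m, (g (2 * i) + g (2 * i + 1)) := by
  induction m with
  | zero => simp
  | succ m ih =>
    have h : 2 * (m + 1) = (2 * m + 1) + 1 := by ring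
    rw [h, Finset.sum_range_succ, Finset.sum_range_succ, ih, Finset.sum_range_succ, add_assoc]

lemma RU_factor {l : ℕ} (U : Fin l → Finset ℕ) (j : Fin l) {i : ℕ} (hi : i < (U j).card / 2) :
    RU U = (X (((U j).sort (· ≤ ·)).getD (2 * i) 0) - X (((U j).sort (· ≤ ·)).getD (2 * i + 1) 0)) *
      ((∏ k ∈ (Finset.range ((U j).card / 2)).erase i,
        (X (((U j).sort (· ≤ ·)).getD (2 * k) 0) - X (((U j).sort (· ≤ ·)).getD (2 * k + 1) 0))) *
       ∏ k ∈ Finset.univ.erase j, Rblock (U k)) := by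
  rw [RU_eq_block_mul U j]
  unfold Rblock
  rw [← Finset.mul_prod_erase _ _ (Finset.mem_range.2 hi), mul_assoc]

lemma block_sum {l : ℕ} (U : Fin l → Finset ℕ) (j : Fin l) :
    ∑ i ∈ U j, SF (RU U * X i) =
      if Odd (U j).card then
        SF (RU U * X (((U j).sort (· ≤ ·)).getD ((U j).card - 1) 0))
      else 0 := by
  rw [sum_finset_eq_range]
  by_cases ho : Odd (U j).card
  · rw [if_pos ho]
    obtain ⟨m, hm⟩ := ho
    have hm2 : (U j).card / 2 = m := by omega
    have h3 : (U j).card - 1 = 2 * m := by omega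
    rw [h3, hm, Finset.sum_range_succ, sum_range_two_mul, Finset.sum_eq_zero, zero_add]
    intro i hi
    rw [Finset.mem_range] at hi
    have hfac := RU_factor U j (i := i) (by omega)
    rw [← SF_add, ← mul_add, hfac]
    exact SF_pair _ _ _
  · rw [if_neg ho]
    rw [Nat.not_odd_iff_even] at ho
    obtain ⟨m, hm⟩ := ho
    have hm' : (U j).card = 2 * m := by omega
    have hm2 : (U j).card / 2 = m := by omega
    rw [hm', sum_range_two_mul]
    apply Finset.sum_eq_zero
    intro i hi
    rw [Finset.mem_range] at hi
    have hfac := RU_factor U j (i := i) (by omega)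
    rw [← SF_add, ← mul_add, hfac]
    exact SF_pair _ _ _

/-- The map `Ψ` of the paper on generators: with `d = λ₁ - λ₂ > 0`, `|λ| = λ₁ + λ₂`,
and `U` a partitioning of `{1,…,|λ|}` into `ℓ` blocks exactly `d` of which have odd
cardinality, `Ψ(R(U)) = SF(R(U)·(y_1 + … + y_{|λ|} - d·y_{|λ|+1})) = ∑_{U'} R(U')`,
where `U'` runs over the partitionings obtained from `U` by adding the new element
`|λ|+1` to one of the odd-cardinality blocks of `U`.
(Indices are 0-based: the set partitioned is `{0,…,n-1}`, `n = λ₁ + λ₂`, and the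
new element is `n`.) -/
theorem Psi_RU_eq_sum
    (lam1 lam2 l : ℕ) (hd : lam2 < lam1) (hlam2 : 0 < lam2)
    (U : Fin l → Finset ℕ)
    (hdisj : ∀ i j, i ≠ j → Disjoint (U i) (U j))
    (hcover : Finset.univ.biUnion U = Finset.range (lam1 + lam2))
    (hodd : (Finset.univ.filter fun j => Odd (U j).card).card = lam1 - lam2) :
    SF (RU U * ((∑ i ∈ Finset.range (lam1 + lam2), X i) -
        C ((lam1 - lam2 : ℕ) : ℂ) * X (lam1 + lam2))) =
      ∑ j ∈ Finset.univ.filter (fun j => Odd (U j).card),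
        RU (Function.update U j (insert (lam1 + lam2) (U j))) := by
  have hsubU : ∀ k : Fin l, U k ⊆ Finset.range (lam1 + lam2) := by
    intro k
    rw [← hcover]
    exact Finset.subset_biUnion_of_mem U (Finset.mem_univ k)
  have hnotin : ∀ k : Fin l, (lam1 + lam2) ∉ U k := by
    intro k h
    have := Finset.mem_range.1 (hsubU k h)
    omega
  have h1 : RU U * ((∑ i ∈ Finset.range (lam1 + lam2), X i) -
      C ((lam1 - lam2 : ℕ) : ℂ) * X (lam1 + lam2)) =
      (∑ i ∈ Finset.range (lam1 + lam2), RU U * X i) -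
        C ((lam1 - lam2 : ℕ) : ℂ) * (RU U * X (lam1 + lam2)) := by
    rw [mul_sub, Finset.mul_sum]; ring
  rw [h1, SF_sub, SF_sum, SF_C_mul, ← hcover,
    Finset.sum_biUnion (fun x _ y _ hxy => hdisj x y hxy)]
  rw [Finset.sum_congr rfl (fun j _ => block_sum U j), Finset.sum_ite,
    Finset.sum_const_zero, add_zero]
  have h3 : C ((lam1 - lam2 : ℕ) : ℂ) * SF (RU U * X (lam1 + lam2)) =
      ∑ _j ∈ Finset.univ.filter (fun j : Fin l => Odd (U j).card),
        SF (RU U * X (lam1 + lam2)) := by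
    rw [Finset.sum_const, hodd, nsmul_eq_mul, map_natCast (C : ℂ →+* MvPolynomial ℕ ℂ)]
  rw [h3, ← Finset.sum_sub_distrib]
  apply Finset.sum_congr rfl
  intro j hj
  rw [Finset.mem_filter] at hj
  have hojd := hj.2
  have hlt : ∀ b ∈ U j, b < lam1 + lam2 := fun b hb => Finset.mem_range.1 (hsubU j hb)
  have hupd : RU (Function.update U j (insert (lam1 + lam2) (U j))) =
      RU U * (X (((U j).sort (· ≤ ·)).getD ((U j).card - 1) 0) - X (lam1 + lam2)) := by
    rw [RU_update, Rblock_insert hlt hojd, RU_eq_block_mul U j]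
    ring
  rw [← SF_sub, ← mul_sub, ← hupd]
  apply SF_eq_self
  have key : ∀ k, k ≠ j → Disjoint (insert (lam1 + lam2) (U j)) (U k) := by
    intro k hkj
    rw [Finset.disjoint_left]
    intro x hx hx'
    rcases Finset.mem_insert.1 hx with rfl | hx2
    · exact hnotin k hx'
    · exact (Finset.disjoint_left.1 (hdisj j k (fun h => hkj h.symm)) hx2) hx'
  have hdisj' : ∀ i k : Fin l, i ≠ k →
      Disjoint (Function.update U j (insert (lam1 + lam2) (U j)) i)
        (Function.update U j (insert (lam1 + lam2) (U j)) k) := by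
    intro i k hik
    by_cases hij : i = j
    · have hkj : k ≠ j := fun h => hik (by rw [hij, h])
      rw [hij, Function.update_self, Function.update_of_ne hkj]
      exact key k hkj
    · by_cases hkj : k = j
      · rw [hkj, Function.update_self, Function.update_of_ne hij]
        exact (key i hij).symm
      · rw [Function.update_of_ne hij, Function.update_of_ne hkj]
        exact hdisj i k hik
  exact fun d hd => fun i => RU_squarefree _ hdisj' d hd i

end
end

section
/- The map Φ: L^ℓ(a−1,b) → L^ℓ(a,b), given by regarding a polynomial in y_1,...,y_{a+b−1} as a polynomial in y_1,...,y_{a+b}, is well-defined (maps generators R(U) to elements of L^ℓ(a,b)) and injective, provided ℓ > a−b ≥ 0. -/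
open MvPolynomial Finset

noncomputable section

/-- `L^ℓ(a,b)`: the span of the polynomials `R(U)` over all partitionings `U` of
`{1,…,a+b}` (0-based: `{0,…,a+b-1}`) into `ℓ` possibly-empty blocks with exactly
`a - b` blocks of odd cardinality. -/
def Lspace (l a b : ℕ) : Submodule ℂ (MvPolynomial ℕ ℂ) :=
  Submodule.span ℂ
    {p | ∃ U : Fin l → Finset ℕ,
      (∀ i j, i ≠ j → Disjoint (U i) (U j)) ∧
      Finset.univ.biUnion U = Finset.range (a + b) ∧
      (Finset.univ.filter fun j => Odd (U j).card).card = a - b ∧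
      p = RU U}

lemma sort_insert_max_s16 {x : ℕ} {s : Finset ℕ} (h : ∀ b ∈ s, b < x) :
    (insert x s).sort (· ≤ ·) = s.sort (· ≤ ·) ++ [x] := by
  have hx : x ∉ s := fun hm => lt_irrefl x (h x hm)
  have hperm : List.Perm ((insert x s).sort (· ≤ ·)) (s.sort (· ≤ ·) ++ [x]) :=
    ((((Finset.sort_perm_toList _ _).trans (Finset.toList_insert hx)).trans
      (List.Perm.cons x (Finset.sort_perm_toList s (· ≤ ·)).symm)).trans
      (List.perm_append_singleton _ _).symm)
  refine List.Perm.eq_of_pairwise' (Finset.pairwise_sort _ _) ?_ hperm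
  · rw [List.pairwise_append]
    refine ⟨Finset.pairwise_sort _ _, List.pairwise_singleton _ x, ?_⟩
    intro a haa y hy
    rw [List.mem_singleton] at hy
    subst hy
    exact (h a ((Finset.mem_sort _).mp haa)).le

lemma Rblock_insert_max {x : ℕ} {s : Finset ℕ} (h : ∀ b ∈ s, b < x)
    (he : Even s.card) : Rblock (insert x s) = Rblock s := by
  have hx : x ∉ s := fun hm => lt_irrefl x (h x hm)
  have hcard : (insert x s).card = s.card + 1 := Finset.card_insert_of_notMem hx
  obtain ⟨k, hk⟩ := he
  have hdiv : (insert x s).card / 2 = s.card / 2 := by omega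
  have hsort := sort_insert_max_s16 h
  have hlen : (s.sort (· ≤ ·)).length = s.card := Finset.length_sort _
  unfold Rblock
  rw [hdiv]
  apply Finset.prod_congr rfl
  intro i hi
  rw [Finset.mem_range] at hi
  have h1 : 2 * i < s.card := by omega
  have h2 : 2 * i + 1 < s.card := by omega
  rw [hsort, List.getD_append _ _ _ _ (by omega), List.getD_append _ _ _ _ (by omega)]

/-- The map `Φ : L^ℓ(a-1,b) → L^ℓ(a,b)`, regarding a polynomial in
`y_1, …, y_{a+b-1}` as a polynomial in `y_1, …, y_{a+b}`, is well defined (i.e.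
`L^ℓ(a-1,b)` is contained in `L^ℓ(a,b)` as subspaces of the polynomial ring) and
injective (being an inclusion), provided `ℓ > a - b ≥ 0` (and `a ≥ 1`). -/
theorem Phi_welldefined_injective
    (l a b : ℕ) (ha : 1 ≤ a) (hba : b ≤ a) (hl : a - b < l) :
    Lspace l (a - 1) b ≤ Lspace l a b ∧
      Function.Injective (fun x : Lspace l (a - 1) b => (x : MvPolynomial ℕ ℂ)) := by
  constructor
  · rw [Lspace, Submodule.span_le]
    rintro p ⟨U, hdisj, hcover, hodd, rfl⟩
    -- parity: rule out b = a
    have hsum : ∑ j, (U j).card = a - 1 + b := by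
      rw [← Finset.card_biUnion (fun i _ j _ hij => hdisj i j hij), hcover,
        Finset.card_range]
    have hblt : b < a := by
      by_contra hge
      have hb : b = a := le_antisymm hba (not_lt.mp hge)
      subst hb
      have : Odd (∑ j, (U j).card) := by
        rw [hsum]; exact ⟨b - 1, by omega⟩
      rw [Finset.odd_sum_iff_odd_card_odd, hodd] at this
      simp at this
    -- there is an even block
    have hlt : (Finset.univ.filter fun j => Odd (U j).card).card < (Finset.univ : Finset (Fin l)).card := by
      rw [hodd, Finset.card_univ, Fintype.card_fin]; omega
    obtain ⟨j₀, hj₀⟩ : ∃ j₀ : Fin l, ¬ Odd (U j₀).card := by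
      by_contra h
      push_neg at h
      have heq : (Finset.univ.filter fun j => Odd (U j).card) = (Finset.univ : Finset (Fin l)) :=
        Finset.filter_true_of_mem fun x _ => h x
      rw [heq] at hlt
      exact lt_irrefl _ hlt
    have heven : Even (U j₀).card := Nat.not_odd_iff_even.mp hj₀
    -- new partition
    set x := a - 1 + b with hxdef
    have hsub : ∀ i, U i ⊆ Finset.range x := fun i => by
      rw [← hcover]; exact Finset.subset_biUnion_of_mem U (Finset.mem_univ i)
    have hxnot : ∀ i, x ∉ U i := fun i hm => by
      have := hsub i hm; rw [Finset.mem_range] at this; omega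
    set U' : Fin l → Finset ℕ := fun i => if i = j₀ then insert x (U i) else U i with hU'
    apply Submodule.subset_span
    refine ⟨U', ?_, ?_, ?_, ?_⟩
    · intro i j hij
      simp only [hU']
      have key : ∀ i j, i ≠ j → Disjoint (if i = j₀ then insert x (U i) else U i) (U j) := by
        intro i j hij
        split
        · rw [Finset.disjoint_insert_left]
          exact ⟨hxnot j, hdisj i j hij⟩
        · exact hdisj i j hij
      rcases eq_or_ne j j₀ with rfl | hj
      · rw [if_neg (by exact fun h => hij (h.trans rfl)), if_pos rfl,
          Finset.disjoint_insert_right]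
        exact ⟨hxnot i, (hdisj j i hij.symm).symm⟩
      · rw [if_neg hj]
        exact key i j hij
    · have : Finset.univ.biUnion U' = insert x (Finset.univ.biUnion U) := by
        ext y
        simp only [Finset.mem_biUnion, Finset.mem_univ, true_and, Finset.mem_insert, hU']
        constructor
        · rintro ⟨i, hi⟩
          by_cases h : i = j₀
          · subst h; rw [if_pos rfl, Finset.mem_insert] at hi
            rcases hi with rfl | hi
            · exact Or.inl rfl
            · exact Or.inr ⟨i, hi⟩
          · rw [if_neg h] at hi; exact Or.inr ⟨i, hi⟩
        · rintro (rfl | ⟨i, hi⟩)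
          · exact ⟨j₀, by rw [if_pos rfl]; exact Finset.mem_insert_self _ _⟩
          · refine ⟨i, ?_⟩
            split
            · exact Finset.mem_insert_of_mem hi
            · exact hi
      rw [this, hcover, hxdef]
      have : a + b = (a - 1 + b) + 1 := by omega
      rw [this, Finset.range_add_one]
    · have hcards : ∀ i, (U' i).card = if i = j₀ then (U i).card + 1 else (U i).card := by
        intro i
        simp only [hU']
        split
        · exact Finset.card_insert_of_notMem (hxnot i)
        · rfl
      have : (Finset.univ.filter fun j => Odd ((U' j).card)) =
          insert j₀ (Finset.univ.filter fun j => Odd ((U j).card)) := by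
        ext i
        simp only [Finset.mem_filter, Finset.mem_univ, true_and, Finset.mem_insert, hcards]
        rcases eq_or_ne i j₀ with rfl | hi
        · simp [Nat.odd_add_one, Nat.not_odd_iff_even, heven]
        · rw [if_neg hi]
          simp [hi]
      rw [this, Finset.card_insert_of_notMem (by simp [Nat.not_odd_iff_even, heven]), hodd]
      omega
    · rw [RU, RU]
      apply Finset.prod_congr rfl
      intro i _
      simp only [hU']
      rcases eq_or_ne i j₀ with rfl | hi
      · rw [if_pos rfl]
        exact (Rblock_insert_max (fun bb hb => by
          have := hsub i hb; rw [Finset.mem_range] at this; exact this) heven).symm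
      · rw [if_neg hi]
  · exact Subtype.val_injective

end
end
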